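/- Let e₁, …, eₙ be an orthogonal basis of V with respect to the quadratic form q. Then the set of products e_I = e_{i₁} ⋯ e_{i_k} over all subsets I = {i₁ < ⋯ < i_k} ⊆ {1,…,n} forms a basis of the Clifford algebra Cl(V,q), and in particular these 2^n elements are linearly independent. -/

import Mathlib

namespace CliffordBasisAux

variable {F : Type*} [Field F] {n : ℕ}

/-- sign `(-1)^{#\{a ∈ I : a < i\}}` -/
def sgn (F : Type*) [Field F] (i : Fin n) (I : Finset (Fin n)) : F :=
  (-1) ^ (I.filter (· < i)).card

lemma sgn_mul_self (i : Fin n) (I : Finset (Fin n)) : sgn F i I * sgn F i I = 1 := by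
  rw [sgn, ← mul_pow]; norm_num

lemma sgn_insert_of_lt {i j : Fin n} (h : i < j) {J : Finset (Fin n)} (hi : i ∉ J) :
    sgn F j (insert i J) = -sgn F j J := by
  rw [sgn, sgn, Finset.filter_insert, if_pos h,
    Finset.card_insert_of_notMem (fun hmem => hi (Finset.mem_of_mem_filter _ hmem)),
    pow_succ, mul_comm, neg_one_mul]

lemma sgn_insert_of_not_lt {i j : Fin n} (h : ¬ i < j) (J : Finset (Fin n)) :
    sgn F j (insert i J) = sgn F j J := by
  rw [sgn, sgn, Finset.filter_insert, if_neg h]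

lemma sgn_erase_of_lt {i j : Fin n} (h : i < j) {J : Finset (Fin n)} (hi : i ∈ J) :
    sgn F j (J.erase i) = -sgn F j J := by
  have := sgn_insert_of_lt (F := F) h (Finset.notMem_erase i J)
  rw [Finset.insert_erase hi] at this
  rw [this, neg_neg]

lemma sgn_erase_of_not_lt {i j : Fin n} (h : ¬ i < j) (J : Finset (Fin n)) :
    sgn F j (J.erase i) = sgn F j J := by
  rw [sgn, sgn, Finset.filter_erase, Finset.erase_eq_of_notMem]
  intro hmem
  exact h (Finset.mem_filter.1 hmem).2

/-- the operator representing Clifford multiplication by the `i`-th basis vector, where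
`d i` is the value of the quadratic form on it. -/
def Aop (d : Fin n → F) (i : Fin n) : (Finset (Fin n) → F) →ₗ[F] (Finset (Fin n) → F) where
  toFun x := fun J =>
    if i ∈ J then sgn F i J * x (J.erase i) else sgn F i J * d i * x (insert i J)
  map_add' x y := by
    funext J
    by_cases h : i ∈ J <;> simp [h, mul_add]
  map_smul' c x := by
    funext J
    by_cases h : i ∈ J <;> simp [h, mul_comm, mul_left_comm]

lemma Aop_apply (d : Fin n → F) (i : Fin n) (x : Finset (Fin n) → F) (J : Finset (Fin n)) :
    Aop d i x J =
      if i ∈ J then sgn F i J * x (J.erase i) else sgn F i J * d i * x (insert i J) := rfl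

lemma Aop_anticomm (d : Fin n → F) {i j : Fin n} (hij : i ≠ j) :
    (Aop d i) ∘ₗ (Aop d j) = -((Aop d j) ∘ₗ (Aop d i)) := by
  wlog h : i < j generalizing i j
  · rw [this hij.symm ((hij.lt_or_gt).resolve_left h), neg_neg]
  refine LinearMap.ext fun x => funext fun J => ?_
  simp only [LinearMap.comp_apply, LinearMap.neg_apply, Pi.neg_apply, Aop_apply]
  have hne : j ≠ i := hij.symm
  by_cases hiJ : i ∈ J <;> by_cases hjJ : j ∈ J
  · rw [if_pos hiJ, if_pos hjJ, if_pos (Finset.mem_erase.2 ⟨hne, hjJ⟩),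
      if_pos (Finset.mem_erase.2 ⟨hij, hiJ⟩), sgn_erase_of_lt h hiJ,
      sgn_erase_of_not_lt (not_lt_of_gt h) J, Finset.erase_right_comm]
    ring
  · rw [if_pos hiJ, if_neg hjJ, if_neg (fun hc => hjJ (Finset.mem_of_mem_erase hc)),
      if_pos (Finset.mem_insert.2 (Or.inr hiJ)), sgn_erase_of_lt h hiJ,
      sgn_insert_of_not_lt (not_lt_of_gt h) J, Finset.erase_insert_of_ne hne]
    ring
  · rw [if_neg hiJ, if_pos hjJ, if_pos (Finset.mem_insert.2 (Or.inr hjJ)),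
      if_neg (fun hc => hiJ (Finset.mem_of_mem_erase hc)),
      sgn_insert_of_lt h hiJ, sgn_erase_of_not_lt (not_lt_of_gt h) J,
      Finset.erase_insert_of_ne hij]
    ring
  · rw [if_neg hiJ, if_neg hjJ, if_neg (fun hc => by
      rcases Finset.mem_insert.1 hc with h' | h'
      exacts [hij h'.symm, hjJ h']),
      if_neg (fun hc => by
      rcases Finset.mem_insert.1 hc with h' | h'
      exacts [hne h'.symm, hiJ h']),
      sgn_insert_of_lt h hiJ, sgn_insert_of_not_lt (not_lt_of_gt h) J,
      Finset.insert_comm]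
    ring

lemma Aop_sq (d : Fin n → F) (i : Fin n) :
    (Aop d i) ∘ₗ (Aop d i) = d i • LinearMap.id := by
  refine LinearMap.ext fun x => funext fun J => ?_
  simp only [LinearMap.comp_apply, LinearMap.smul_apply, LinearMap.id_apply, Pi.smul_apply,
    smul_eq_mul, Aop_apply]
  by_cases hiJ : i ∈ J
  · rw [if_pos hiJ, if_neg (Finset.notMem_erase i J),
      sgn_erase_of_not_lt (lt_irrefl i) J, Finset.insert_erase hiJ, ← mul_assoc, ← mul_assoc,
      sgn_mul_self, one_mul]
  · rw [if_neg hiJ, if_pos (Finset.mem_insert_self i J),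
      sgn_insert_of_not_lt (lt_irrefl i) J, Finset.erase_insert hiJ]
    rw [show sgn F i J * d i * (sgn F i J * x J) = (sgn F i J * sgn F i J) * (d i * x J) by ring, sgn_mul_self, one_mul]

lemma sum_diag' {α M : Type*} [DecidableEq α] [AddCommMonoid M] (s : Finset α) (f : α × α → M) :
    ∑ p ∈ s.diag, f p = ∑ a ∈ s, f (a, a) := by
  refine Finset.sum_nbij' (fun p => p.1) (fun a => (a, a)) ?_ ?_ ?_ ?_ ?_ <;>
    simp +contextual [Finset.mem_diag]

variable {V : Type*} [AddCommGroup V] [Module F V]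

noncomputable def mu (q : QuadraticForm F V) (e : Module.Basis (Fin n) F V) :
    V →ₗ[F] Module.End F (Finset (Fin n) → F) :=
  e.constr F (Aop (fun i => q (e i)))

lemma mu_sq (h2 : (2 : F) ≠ 0) (q : QuadraticForm F V) (e : Module.Basis (Fin n) F V)
    (horth : ∀ i j : Fin n, i ≠ j → (q (e i + e j) - q (e i) - q (e j)) / 2 = 0) (v : V) :
    mu q e v * mu q e v = algebraMap F (Module.End F (Finset (Fin n) → F)) (q v) := by
  classical
  set d : Fin n → F := fun i => q (e i) with hd
  set c : Fin n → F := fun i => e.repr v i with hc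
  have hpolar : ∀ i j : Fin n, i ≠ j → QuadraticMap.polar q (e i) (e j) = 0 := by
    intro i j hij
    have h := horth i j hij
    rw [div_eq_zero_iff] at h
    exact (h.resolve_right h2).symm ▸ rfl
  have hmu : mu q e v = ∑ i, c i • Aop d i := by
    rw [mu, Module.Basis.constr_apply_fintype]
    rfl
  have hv : v = ∑ i, c i • e i := by
    rw [hc]; exact (e.sum_repr v).symm
  -- RHS value
  have hq : q v = ∑ i, c i * c i * d i := by
    conv_lhs => rw [hv]
    rw [QuadraticMap.map_sum]
    have : ∀ ij ∈ Finset.univ.sym2.filter (¬ ·.IsDiag),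
        Sym2.lift ⟨fun i j => QuadraticMap.polar q (c i • e i) (c j • e j),
          fun _ _ => QuadraticMap.polar_comm _ _ _⟩ ij = 0 := by
      intro ij hij
      rw [Finset.mem_filter] at hij
      induction ij with
      | _ a b =>
        have hab : a ≠ b := by simpa using hij.2
        simp [QuadraticMap.polar_smul_left, QuadraticMap.polar_smul_right, hpolar a b hab]
    rw [Finset.sum_eq_zero (s := Finset.univ.sym2.filter (¬ ·.IsDiag)) (fun ij hij => by
      rw [← this ij hij]
      induction ij with
      | _ a b => rfl), add_zero]
    refine Finset.sum_congr rfl fun i _ => ?_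
    rw [QuadraticMap.map_smul]
    simp [hd, mul_comm, mul_assoc]
  rw [hmu, Finset.sum_mul_sum, hq]
  simp_rw [smul_mul_smul_comm]
  rw [← Finset.sum_product']
  rw [← Finset.diag_union_offDiag, Finset.sum_union (Finset.disjoint_diag_offDiag _)]
  have hoff : ∑ p ∈ Finset.univ.offDiag,
      (c p.1 * c p.2) • (Aop d p.1 * Aop (F := F) d p.2) = 0 := by
    refine Finset.sum_involution (fun p _ => p.swap) ?_ ?_ ?_ ?_
    · intro p hp
      have hne : p.1 ≠ p.2 := (Finset.mem_offDiag.1 hp).2.2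
      have := Aop_anticomm d hne
      rw [Module.End.mul_eq_comp, Module.End.mul_eq_comp, Prod.fst_swap, Prod.snd_swap,
        mul_comm (c p.2), this]
      simp [← smul_add]
    · intro p hp _ hcon
      exact (Finset.mem_offDiag.1 hp).2.2 ((congrArg Prod.fst hcon).symm)
    · intro p hp
      exact Finset.mem_offDiag.2 ⟨(Finset.mem_offDiag.1 hp).2.1, (Finset.mem_offDiag.1 hp).1,
        (Finset.mem_offDiag.1 hp).2.2.symm⟩
    · intro p hp; rfl
  rw [hoff, add_zero, sum_diag']
  rw [Algebra.algebraMap_eq_smul_one, Finset.sum_smul]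
  refine Finset.sum_congr rfl fun i _ => ?_
  rw [Module.End.mul_eq_comp, Aop_sq, smul_smul]
  rfl


section Rep
variable (h2 : (2 : F) ≠ 0) (q : QuadraticForm F V) (e : Module.Basis (Fin n) F V)
    (horth : ∀ i j : Fin n, i ≠ j → (q (e i + e j) - q (e i) - q (e j)) / 2 = 0)

lemma Aop_single {d : Fin n → F} {i : Fin n} {T : Finset (Fin n)} (hT : ∀ a ∈ T, i < a) :
    Aop d i (Pi.single T (1 : F)) = Pi.single (insert i T) (1 : F) := by
  classical
  have hiT : i ∉ T := fun h => lt_irrefl i (hT i h)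
  funext J
  rw [Aop_apply]
  by_cases hiJ : i ∈ J
  · rw [if_pos hiJ]
    by_cases hJ : J = insert i T
    · subst hJ
      have h1 : sgn F i (insert i T) = 1 := by
        rw [sgn, Finset.filter_eq_empty_iff.2, Finset.card_empty, pow_zero]
        intro a ha
        rcases Finset.mem_insert.1 ha with rfl | ha
        · exact lt_irrefl a
        · exact not_lt_of_gt (hT a ha)
      rw [h1, one_mul, Finset.erase_insert hiT, Pi.single_eq_same, Pi.single_eq_same]
    · rw [Pi.single_eq_of_ne hJ, Pi.single_eq_of_ne, mul_zero]
      intro hET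
      exact hJ (by rw [← Finset.insert_erase hiJ, hET])
  · rw [if_neg hiJ, Pi.single_eq_of_ne, Pi.single_eq_of_ne, mul_zero]
    · intro hJ
      exact hiJ (hJ ▸ Finset.mem_insert_self i T)
    · intro hJ
      exact hiT (hJ ▸ Finset.mem_insert_self i J)

/-- the algebra morphism from the Clifford algebra to the endomorphisms -/
noncomputable def Phi : CliffordAlgebra q →ₐ[F] Module.End F (Finset (Fin n) → F) :=
  CliffordAlgebra.lift q ⟨mu q e, mu_sq h2 q e horth⟩

lemma Phi_prod_single (l : List (Fin n)) (hl : l.Pairwise (· < ·)) :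
    Phi h2 q e horth ((l.map (fun i => CliffordAlgebra.ι q (e i))).prod) (Pi.single ∅ 1)
      = Pi.single l.toFinset (1 : F) := by
  classical
  induction l with
  | nil => simp
  | cons i t ih =>
    have ht : t.Pairwise (· < ·) := hl.of_cons
    have hit : ∀ a ∈ t, i < a := fun a ha => List.rel_of_pairwise_cons hl ha
    rw [List.map_cons, List.prod_cons, map_mul]
    have h1 : Phi h2 q e horth (CliffordAlgebra.ι q (e i)) = Aop (fun i => q (e i)) i := by
      rw [Phi, CliffordAlgebra.lift_ι_apply, mu, Module.Basis.constr_basis]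
    rw [Module.End.mul_apply, ih ht, h1, List.toFinset_cons]
    exact Aop_single (fun a ha => hit a (List.mem_toFinset.1 ha))

end Rep
end CliffordBasisAux


/-- Let `e₁, …, eₙ` be an orthogonal basis of `V` (i.e. the associated bilinear form
`b(eᵢ,eⱼ) = (q(eᵢ+eⱼ) − q(eᵢ) − q(eⱼ))/2` vanishes for `i ≠ j`).  Then the family of
products `e_I = e_{i₁} ⋯ e_{i_k}` indexed by subsets `I = {i₁ < ⋯ < i_k} ⊆ {1,…,n}`
forms a basis of the Clifford algebra `Cl(V,q)`: the `2^n` elements are linearly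
independent and they span the whole algebra. -/
theorem clifford_orthogonal_basis_products_basis
    {F V : Type*} [Field F] [AddCommGroup V] [Module F V]
    (h2 : (2 : F) ≠ 0) (q : QuadraticForm F V) {n : ℕ} (e : Module.Basis (Fin n) F V)
    (horth : ∀ i j : Fin n, i ≠ j → (q (e i + e j) - q (e i) - q (e j)) / 2 = 0) :
    LinearIndependent F
        (fun I : Finset (Fin n) =>
          ((I.sort (· ≤ ·)).map (fun i => CliffordAlgebra.ι q (e i))).prod) ∧
      Submodule.span F
        (Set.range (fun I : Finset (Fin n) =>
          ((I.sort (· ≤ ·)).map (fun i => CliffordAlgebra.ι q (e i))).prod)) = ⊤ := by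
  classical
  set f : Finset (Fin n) → CliffordAlgebra q := fun I =>
    ((I.sort (· ≤ ·)).map (fun i => CliffordAlgebra.ι q (e i))).prod with hf
  constructor
  · -- linear independence
    have key : ∀ I : Finset (Fin n),
        (CliffordBasisAux.Phi h2 q e horth) (f I) (Pi.single ∅ 1) = Pi.single I (1 : F) := by
      intro I
      have hsort := (Finset.sortedLT_sort I).pairwise
      have h := CliffordBasisAux.Phi_prod_single h2 q e horth _ hsort
      rwa [Finset.sort_toFinset] at h
    set θ : CliffordAlgebra q →ₗ[F] (Finset (Fin n) → F) :=
      (LinearMap.applyₗ (Pi.single ∅ (1:F))).comp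
        (CliffordBasisAux.Phi h2 q e horth).toLinearMap with hθ
    refine LinearIndependent.of_comp θ ?_
    have hcomp : ⇑θ ∘ f = ⇑(Pi.basisFun F (Finset (Fin n))) := by
      funext I
      rw [Function.comp_apply, Pi.basisFun_apply]
      exact key I
    rw [hcomp]
    exact (Pi.basisFun F (Finset (Fin n))).linearIndependent
  · -- spanning
    set S := Submodule.span F (Set.range f) with hS
    have hrange : ∀ l : List (Fin n), l.Pairwise (· < ·) →
        ((l.map (fun i => CliffordAlgebra.ι q (e i))).prod ∈ Set.range f) := by
      intro l hl
      refine ⟨l.toFinset, ?_⟩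
      have hsl : Finset.sort l.toFinset (· ≤ ·) = l :=
        (List.toFinset_sort (· ≤ ·) hl.nodup).2 (hl.imp fun h => le_of_lt h)
      simp only [hf, hsl]
    have key : ∀ (l : List (Fin n)), l.Pairwise (· < ·) → ∀ (i : Fin n),
        CliffordAlgebra.ι q (e i) * ((l.map (fun j => CliffordAlgebra.ι q (e j))).prod) ∈
          Submodule.span F {x | ∃ l' : List (Fin n), l'.Pairwise (· < ·) ∧
            (∀ a ∈ l', a = i ∨ a ∈ l) ∧ ((l'.map (fun j => CliffordAlgebra.ι q (e j))).prod) = x} := by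
      intro l
      induction l with
      | nil =>
        intro _ i
        refine Submodule.subset_span ⟨[i], List.pairwise_singleton _ i, by simp, by simp⟩
      | cons j t ih =>
        intro hsort i
        have ht : t.Pairwise (· < ·) := hsort.of_cons
        have hjt : ∀ a ∈ t, j < a := fun a ha => List.rel_of_pairwise_cons hsort ha
        rcases lt_trichotomy i j with hij | rfl | hij
        · refine Submodule.subset_span ⟨i :: j :: t, ?_, ?_, by simp [List.prod_cons]⟩
          · refine List.pairwise_cons.2 ⟨?_, hsort⟩
            intro b hb
            rcases List.mem_cons.1 hb with rfl | hb
            · exact hij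
            · exact lt_trans hij (hjt b hb)
          · intro a ha
            rcases List.mem_cons.1 ha with rfl | ha
            · exact Or.inl rfl
            · exact Or.inr ha
        · rw [List.map_cons, List.prod_cons, ← mul_assoc, CliffordAlgebra.ι_sq_scalar,
            ← Algebra.smul_def]
          exact Submodule.smul_mem _ _ (Submodule.subset_span
            ⟨t, ht, fun a ha => Or.inr (List.mem_cons_of_mem _ ha), rfl⟩)
        · have hOrtho : QuadraticMap.IsOrtho q (e i) (e j) := by
            have h := horth i j (ne_of_gt hij)
            rw [div_eq_zero_iff] at h
            have h' := h.resolve_right h2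
            rw [QuadraticMap.isOrtho_def]
            linear_combination h'
          rw [List.map_cons, List.prod_cons, ← mul_assoc,
            CliffordAlgebra.ι_mul_ι_comm_of_isOrtho hOrtho, neg_mul, mul_assoc]
          refine neg_mem ?_
          have hmem := ih ht i
          have hmap := Submodule.mem_map_of_mem
            (f := LinearMap.mulLeft F (CliffordAlgebra.ι q (e j))) hmem
          rw [Submodule.map_span] at hmap
          refine Submodule.span_le.2 ?_ hmap
          rintro _ ⟨x, ⟨l', hl', hmeml', rfl⟩, rfl⟩
          rw [LinearMap.mulLeft_apply]
          refine Submodule.subset_span ⟨j :: l', ?_, ?_, by simp [List.prod_cons]⟩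
          · refine List.pairwise_cons.2 ⟨?_, hl'⟩
            intro b hb
            rcases hmeml' b hb with rfl | hb
            · exact hij
            · exact hjt b hb
          · intro a ha
            rcases List.mem_cons.1 ha with rfl | ha
            · exact Or.inr (List.mem_cons_self)
            · rcases hmeml' a ha with rfl | ha
              · exact Or.inl rfl
              · exact Or.inr (List.mem_cons_of_mem _ ha)
    have hSmulLeft : ∀ (i : Fin n) (x : CliffordAlgebra q), x ∈ S →
        CliffordAlgebra.ι q (e i) * x ∈ S := by
      intro i x hx
      have hmap := Submodule.mem_map_of_mem
        (f := LinearMap.mulLeft F (CliffordAlgebra.ι q (e i))) hx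
      rw [hS, Submodule.map_span] at hmap
      refine Submodule.span_le.2 ?_ hmap
      rintro _ ⟨y, ⟨I, rfl⟩, rfl⟩
      rw [LinearMap.mulLeft_apply]
      have hs := (Finset.sortedLT_sort I).pairwise
      refine Submodule.span_le.2 ?_ (key _ hs i)
      rintro x ⟨l', hl', _, rfl⟩
      exact Submodule.subset_span (hrange l' hl')
    have hall : ∀ l : List (Fin n),
        ((l.map (fun j => CliffordAlgebra.ι q (e j))).prod) ∈ S := by
      intro l
      induction l with
      | nil =>
        refine Submodule.subset_span ⟨∅, ?_⟩
        simp [hf]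
      | cons i t iht =>
        rw [List.map_cons, List.prod_cons]
        exact hSmulLeft i _ iht
    rw [eq_top_iff]
    rintro x -
    induction x using CliffordAlgebra.induction with
    | algebraMap r =>
      rw [Algebra.algebraMap_eq_smul_one]
      exact Submodule.smul_mem _ _ (by simpa using hall [])
    | ι v =>
      have hv : CliffordAlgebra.ι q v = ∑ i, e.repr v i • CliffordAlgebra.ι q (e i) := by
        conv_lhs => rw [← e.sum_repr v]
        rw [map_sum]
        simp
      rw [hv]
      exact Submodule.sum_mem _ fun i _ => Submodule.smul_mem _ _ (by simpa using hall [i])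
    | mul x y hx hy =>
      have hmul : S * S ≤ S := by
        rw [hS, Submodule.span_mul_span]
        refine Submodule.span_le.2 ?_
        rintro _ ⟨a, ⟨I, rfl⟩, b, ⟨J, rfl⟩, rfl⟩
        have heq : f I * f J =
            ((((I.sort (· ≤ ·)) ++ (J.sort (· ≤ ·))).map
              (fun i => CliffordAlgebra.ι q (e i))).prod) := by
          rw [List.map_append, List.prod_append, hf]
        show f I * f J ∈ (Submodule.span F (Set.range f) : Set (CliffordAlgebra q))
        rw [SetLike.mem_coe, heq]
        exact hall _
      exact hmul (Submodule.mul_mem_mul hx hy)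
    | add x y hx hy => exact add_mem hx hy
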